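/- Let X be a separable Lindenstrauss space that contains a contractively complemented isometric copy of c (a linear isometric embedding J : c → X together with a bounded linear projection P : X → X with range J(c) and ‖P‖ ≤ 1). Then there exists x in the unit sphere S_X such that sup{x*(x) : x* ∈ ext(B_{X*}) \ D(x)} = 1. -/

import Mathlib

open Filter Topology Metric
open scoped ENNReal

noncomputable section

/-- The space `ℓ₁` of absolutely summable real sequences. -/
abbrev EllOne : Type := lp (fun _ : ℕ => ℝ) 1

/-- The subspace of `ℓ∞` consisting of convergent real sequences. -/
def convSeq : Subspace ℝ (lp (fun _ : ℕ => ℝ) ∞) where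
  carrier := {f | ∃ l : ℝ, Tendsto (fun n => f n) atTop (𝓝 l)}
  add_mem' := by
    rintro f g ⟨a, ha⟩ ⟨b, hb⟩
    exact ⟨a + b, by simpa [lp.coeFn_add] using ha.add hb⟩
  zero_mem' := ⟨0, by simp [lp.coeFn_zero]⟩
  smul_mem' := by
    rintro c f ⟨a, ha⟩
    exact ⟨c * a, by simpa [lp.coeFn_smul] using ha.const_mul c⟩

/-- The Banach space `c` of convergent real sequences with the sup norm,
realized as a subspace of `ℓ∞`. -/
abbrev SpaceC : Type := ↥convSeq

/-- A normed space is polyhedral if the unit ball of each of its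
finite-dimensional subspaces is a polytope (the convex hull of finitely many points). -/
def IsPolyhedralSpace (X : Type*) [NormedAddCommGroup X] [NormedSpace ℝ X] : Prop :=
  ∀ Y : Subspace ℝ X, FiniteDimensional ℝ Y →
    ∃ F : Set Y, F.Finite ∧ closedBall (0 : Y) 1 = convexHull ℝ F

/-- The set of extreme points of the closed unit ball of the dual of `X`. -/
def extBdual (X : Type*) [NormedAddCommGroup X] [NormedSpace ℝ X] :
    Set (StrongDual ℝ X) :=
  Set.extremePoints ℝ (closedBall (0 : StrongDual ℝ X) 1)

/-- `D(x) = {x* ∈ S_{X*} : x*(x) = 1}`. -/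
def Dface {X : Type*} [NormedAddCommGroup X] [NormedSpace ℝ X] (x : X) :
    Set (StrongDual ℝ X) :=
  {f | ‖f‖ = 1 ∧ f x = 1}

/-- A Lindenstrauss space: a real Banach space whose dual is isometrically
isomorphic to `L¹(μ)` for some measure `μ`. -/
def IsLindenstrauss (X : Type) [NormedAddCommGroup X] [NormedSpace ℝ X] : Prop :=
  ∃ (α : Type) (_ : MeasurableSpace α) (μ : MeasureTheory.Measure α),
    Nonempty (StrongDual ℝ X ≃ₗᵢ[ℝ] MeasureTheory.Lp ℝ 1 μ)

/-- `X` contains a contractively complemented isometric copy of `c`: a linear isometric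
embedding `J : c → X` together with a bounded linear projection `P : X → X` with
range `J(c)` and `‖P‖ ≤ 1`. -/
def ContractivelyComplementedCopyOfC (X : Type) [NormedAddCommGroup X]
    [NormedSpace ℝ X] : Prop :=
  ∃ (J : SpaceC →ₗᵢ[ℝ] X) (P : X →L[ℝ] X),
    (∀ y, P (P y) = P y) ∧ Set.range P = Set.range J ∧ ‖P‖ ≤ 1

section Aux
open NormedSpace Set

/-! Auxiliary material -/

instance locConvWeakDual' {X : Type} [NormedAddCommGroup X] [NormedSpace ℝ X] :
    LocallyConvexSpace ℝ (WeakDual ℝ X) :=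
  WeakBilin.locallyConvexSpace (B := topDualPairing ℝ X)

/-- Every nonzero vector's norm is attained by an extreme point of the dual unit ball. -/
theorem exists_extreme_attains {X : Type} [NormedAddCommGroup X] [NormedSpace ℝ X]
    (y : X) (hy : y ≠ 0) :
    ∃ f ∈ Set.extremePoints ℝ (closedBall (0 : StrongDual ℝ X) 1), f y = ‖y‖ := by
  classical
  set B : Set (WeakDual ℝ X) := WeakDual.toStrongDual ⁻¹' closedBall 0 1 with hB
  have hBcomp : IsCompact B := WeakDual.isCompact_closedBall (𝕜 := ℝ) (0 : StrongDual ℝ X) 1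
  let l : WeakDual ℝ X →L[ℝ] ℝ :=
    { toFun := fun f => f y
      map_add' := fun f g => rfl
      map_smul' := fun c f => rfl
      cont := WeakBilin.eval_continuous _ y }
  obtain ⟨g, hg1, hgy⟩ := exists_dual_vector ℝ y (norm_ne_zero_iff.mpr hy)
  have hgB : (g : WeakDual ℝ X) ∈ B := by
    exact mem_closedBall_zero_iff.mpr hg1.le
  set F : Set (WeakDual ℝ X) := {f ∈ B | ∀ h ∈ B, l h ≤ l f} with hF
  have hexp : IsExposed ℝ B F := fun _ => ⟨l, rfl⟩
  have hFne : F.Nonempty := by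
    obtain ⟨f, hfB, hfmax⟩ := hBcomp.exists_isMaxOn ⟨g, hgB⟩ l.continuous.continuousOn
    exact ⟨f, hfB, hfmax⟩
  obtain ⟨e, he⟩ := (hexp.isCompact hBcomp).extremePoints_nonempty hFne
  have heB : e ∈ Set.extremePoints ℝ B :=
    hexp.isExtreme.extremePoints_subset_extremePoints he
  refine ⟨WeakDual.toStrongDual e, heB, ?_⟩
  have heB' : ‖WeakDual.toStrongDual e‖ ≤ 1 := by
    simpa [hB, mem_closedBall_zero_iff] using heB.1
  have hle : l e ≤ ‖y‖ := by
    calc l e ≤ ‖(WeakDual.toStrongDual e) y‖ := le_abs_self _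
      _ ≤ ‖WeakDual.toStrongDual e‖ * ‖y‖ := (WeakDual.toStrongDual e).le_opNorm y
      _ ≤ 1 * ‖y‖ := by nlinarith [norm_nonneg y]
      _ = ‖y‖ := one_mul _
  have hge : ‖y‖ ≤ l e := by
    have := he.1.2 (g : WeakDual ℝ X) hgB
    calc ‖y‖ = l g := hgy.symm
      _ ≤ l e := this
  exact le_antisymm hle hge

/-- Norm of an `ℓ∞` element whose coordinate norms are bounded by `M` and attain `M`. -/
theorem linf_norm_eq_of_attained (f : lp (fun _ : ℕ => ℝ) ∞) (M : ℝ)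
    (h1 : ∀ k, ‖f k‖ ≤ M) (h2 : ∃ k, ‖f k‖ = M) : ‖f‖ = M := by
  rw [lp.norm_eq_ciSup]
  obtain ⟨k, hk⟩ := h2
  refine le_antisymm (ciSup_le h1) ?_
  rw [← hk]
  exact le_ciSup ⟨M, by rintro _ ⟨j, rfl⟩; exact h1 j⟩ k

/-- Norm of an `ℓ∞` element whose coordinate norms are bounded by `M` and tend to `M`. -/
theorem linf_norm_eq_of_tendsto (f : lp (fun _ : ℕ => ℝ) ∞) (M : ℝ)
    (h1 : ∀ k, ‖f k‖ ≤ M) (h2 : Tendsto (fun k => ‖f k‖) atTop (𝓝 M)) : ‖f‖ = M := by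
  rw [lp.norm_eq_ciSup]
  refine le_antisymm (ciSup_le h1) ?_
  exact le_of_tendsto' h2 fun k => le_ciSup ⟨M, by rintro _ ⟨j, rfl⟩; exact h1 j⟩ k

end Aux

section Construction

/-- The sequence `k ↦ 1 - 1/(k+1)`. -/
def uFun : ℕ → ℝ := fun k => 1 - 1 / (k + 1)

lemma uFun_nonneg (k : ℕ) : 0 ≤ uFun k := by
  have h1 : (1 : ℝ) / (k + 1) ≤ 1 := by
    rw [div_le_one (by positivity)]; linarith [Nat.cast_nonneg (α := ℝ) k]
  simp only [uFun]; linarith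

lemma uFun_lt_one (k : ℕ) : uFun k < 1 := by
  have : (0 : ℝ) < 1 / (k + 1) := by positivity
  simp only [uFun]; linarith

lemma uFun_tendsto : Tendsto uFun atTop (𝓝 1) := by
  have h : Tendsto (fun k : ℕ => 1 - 1 / ((k : ℝ) + 1)) atTop (𝓝 (1 - 0)) :=
    tendsto_const_nhds.sub tendsto_one_div_add_atTop_nhds_zero_nat
  rw [sub_zero] at h
  exact h

lemma one_div_le_one_nat (n : ℕ) : (1:ℝ) / (n + 1) ≤ 1 := by
  rw [div_le_one (by positivity)]
  linarith [Nat.cast_nonneg (α := ℝ) n]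

lemma uFun_norm_le (k : ℕ) : ‖uFun k‖ ≤ 1 := by
  rw [Real.norm_eq_abs, abs_of_nonneg (uFun_nonneg k)]
  exact (uFun_lt_one k).le

def uLp : lp (fun _ : ℕ => ℝ) ∞ :=
  ⟨uFun, memℓp_infty ⟨1, by rintro _ ⟨k, rfl⟩; exact uFun_norm_le k⟩⟩

lemma uLp_apply (k : ℕ) : uLp k = uFun k := rfl

def uC : SpaceC := ⟨uLp, 1, by simpa [uLp_apply] using uFun_tendsto⟩

def eLp (n : ℕ) : lp (fun _ : ℕ => ℝ) ∞ := lp.single ∞ n (2 / (n + 1))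

lemma eLp_apply_self (n : ℕ) : eLp n n = 2 / (n + 1) := lp.single_apply_self ∞ n _

lemma eLp_apply_ne (n : ℕ) {k : ℕ} (h : k ≠ n) : eLp n k = 0 := lp.single_apply_ne ∞ n _ h

def eC (n : ℕ) : SpaceC :=
  ⟨eLp n, 0, by
    refine Tendsto.congr' ?_ tendsto_const_nhds
    filter_upwards [eventually_gt_atTop n] with k hk
    exact (eLp_apply_ne n hk.ne').symm⟩

def vC (n : ℕ) : SpaceC := uC + eC n

lemma vC_coe (n : ℕ) (k : ℕ) : ((vC n : SpaceC) : lp (fun _ : ℕ => ℝ) ∞) k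
    = uFun k + eLp n k := by
  rfl

lemma norm_uC : ‖uC‖ = 1 := by
  show ‖uLp‖ = 1
  refine linf_norm_eq_of_tendsto _ _ (fun k => ?_) ?_
  · simpa [uLp_apply, Real.norm_eq_abs, abs_of_nonneg (uFun_nonneg k)] using (uFun_lt_one k).le
  · simpa [uLp_apply, Real.norm_eq_abs, abs_of_nonneg (uFun_nonneg _)] using uFun_tendsto

lemma one_div_pos_nat (n : ℕ) : (0:ℝ) < 1 / (n+1) := by positivity

lemma norm_vC (n : ℕ) : ‖vC n‖ = 1 + 1 / (n + 1) := by
  show ‖(uLp + eLp n : lp (fun _ : ℕ => ℝ) ∞)‖ = 1 + 1 / (n+1)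
  refine linf_norm_eq_of_attained _ _ (fun k => ?_) ⟨n, ?_⟩
  · rcases eq_or_ne k n with rfl | hk
    · have hnn : (0:ℝ) ≤ uFun k + 2/(k+1) := by
        have h2 : (0:ℝ) ≤ 2/((k:ℝ)+1) := by positivity
        linarith [uFun_nonneg k]
      rw [lp.coeFn_add]
      simp only [Pi.add_apply, uLp_apply, eLp_apply_self]
      rw [Real.norm_eq_abs, abs_of_nonneg hnn]
      simp only [uFun]
      apply le_of_eq
      ring
    · rw [lp.coeFn_add]
      simp only [Pi.add_apply, uLp_apply, eLp_apply_ne n hk, add_zero]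
      rw [Real.norm_eq_abs, abs_of_nonneg (uFun_nonneg k)]
      have := one_div_pos_nat n
      linarith [uFun_lt_one k]
  · have hnn : (0:ℝ) ≤ uFun n + 2/(n+1) := by
      have h2 : (0:ℝ) ≤ 2/((n:ℝ)+1) := by positivity
      linarith [uFun_nonneg n]
    rw [lp.coeFn_add]
    simp only [Pi.add_apply, uLp_apply, eLp_apply_self]
    rw [Real.norm_eq_abs, abs_of_nonneg hnn]
    simp only [uFun]
    ring
lemma norm_uC_add_vC (n : ℕ) : ‖uC + vC n‖ = 2 := by
  show ‖(uLp + (uLp + eLp n) : lp (fun _ : ℕ => ℝ) ∞)‖ = 2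
  refine linf_norm_eq_of_attained _ _ (fun k => ?_) ⟨n, ?_⟩
  · rcases eq_or_ne k n with rfl | hk
    · have hnn : (0:ℝ) ≤ uFun k + (uFun k + 2/(k+1)) := by
        have h2 : (0:ℝ) ≤ 2/((k:ℝ)+1) := by positivity
        linarith [uFun_nonneg k]
      rw [lp.coeFn_add, Pi.add_apply, lp.coeFn_add]
      simp only [Pi.add_apply, uLp_apply, eLp_apply_self]
      rw [Real.norm_eq_abs, abs_of_nonneg hnn]
      simp only [uFun]
      apply le_of_eq
      ring
    · rw [lp.coeFn_add, Pi.add_apply, lp.coeFn_add]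
      simp only [Pi.add_apply, uLp_apply, eLp_apply_ne n hk, add_zero]
      rw [Real.norm_eq_abs, abs_of_nonneg (by linarith [uFun_nonneg k])]
      linarith [uFun_lt_one k]
  · have hnn : (0:ℝ) ≤ uFun n + (uFun n + 2/(n+1)) := by
      have h2 : (0:ℝ) ≤ 2/((n:ℝ)+1) := by positivity
      linarith [uFun_nonneg n]
    rw [lp.coeFn_add, Pi.add_apply, lp.coeFn_add]
    simp only [Pi.add_apply, uLp_apply, eLp_apply_self]
    rw [Real.norm_eq_abs, abs_of_nonneg hnn]
    simp only [uFun]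
    ring

lemma norm_eC (n : ℕ) : ‖eC n‖ = 2 / (n + 1) := by
  show ‖eLp n‖ = 2 / (n+1)
  refine linf_norm_eq_of_attained _ _ (fun k => ?_) ⟨n, ?_⟩
  · rcases eq_or_ne k n with rfl | hk
    · rw [eLp_apply_self, Real.norm_eq_abs, abs_of_nonneg (by positivity)]
    · rw [eLp_apply_ne n hk]; simp; positivity
  · rw [eLp_apply_self, Real.norm_eq_abs, abs_of_nonneg (by positivity)]

end Construction

/-- If a separable Lindenstrauss space contains a contractively complemented isometric
copy of `c`, then there is a point `x ∈ S_X` with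
`sup{x*(x) : x* ∈ ext(B_{X*}) \ D(x)} = 1`. -/
theorem separable_lindenstrauss_sup_eq_one_of_ccc
    {X : Type} [NormedAddCommGroup X] [NormedSpace ℝ X] [CompleteSpace X]
    [TopologicalSpace.SeparableSpace X] (hL : IsLindenstrauss X)
    (hccc : ContractivelyComplementedCopyOfC X) :
    ∃ x : X, ‖x‖ = 1 ∧
      sSup ((fun f : StrongDual ℝ X => f x) '' (extBdual X \ Dface x)) = 1 := by
  obtain ⟨J, -, -, -, -⟩ := hccc
  refine ⟨J uC, by rw [J.norm_map, norm_uC], ?_⟩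
  set x : X := J uC with hx
  set S : Set ℝ := (fun f : StrongDual ℝ X => f x) '' (extBdual X \ Dface x) with hS
  -- every value in S is at most 1
  have hub : ∀ r ∈ S, r ≤ 1 := by
    rintro r ⟨f, ⟨hfe, -⟩, rfl⟩
    have hf1 : ‖f‖ ≤ 1 := by
      have := hfe.1
      rwa [mem_closedBall_zero_iff] at this
    calc f x ≤ ‖f x‖ := le_abs_self _
      _ ≤ ‖f‖ * ‖x‖ := f.le_opNorm x
      _ ≤ 1 * 1 := by
          apply mul_le_mul hf1 _ (norm_nonneg _) zero_le_one
          rw [hx, J.norm_map, norm_uC]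
      _ = 1 := one_mul 1
  -- for each n, the value 1 - 1/(n+1) belongs to S
  have hmem : ∀ n : ℕ, (1 - 1 / (n + 1) : ℝ) ∈ S := by
    intro n
    have hvne : J (vC n) ≠ 0 := by
      rw [← norm_ne_zero_iff, J.norm_map, norm_vC]
      positivity
    obtain ⟨f, hfe, hfv⟩ := exists_extreme_attains (J (vC n)) hvne
    rw [J.norm_map, norm_vC] at hfv
    have hf1 : ‖f‖ ≤ 1 := by
      have := hfe.1; rwa [mem_closedBall_zero_iff] at this
    -- upper bound for f x
    have hupper : f x ≤ 1 - 1 / (n + 1) := by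
      have h2 : f (J (uC + vC n)) ≤ 2 := by
        calc f (J (uC + vC n)) ≤ ‖f (J (uC + vC n))‖ := le_abs_self _
          _ ≤ ‖f‖ * ‖J (uC + vC n)‖ := f.le_opNorm _
          _ ≤ 1 * 2 := by
              rw [J.norm_map, norm_uC_add_vC]
              exact mul_le_mul_of_nonneg_right hf1 (by norm_num)
          _ = 2 := one_mul 2
      have hsplit : f (J (uC + vC n)) = f x + f (J (vC n)) := by
        rw [map_add, map_add]
      rw [hsplit, hfv] at h2
      linarith
    -- lower bound for f x
    have hlower : 1 - 1 / (n + 1) ≤ f x := by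
      have h3 : f (J (eC n)) ≤ 2 / (n + 1) := by
        calc f (J (eC n)) ≤ ‖f (J (eC n))‖ := le_abs_self _
          _ ≤ ‖f‖ * ‖J (eC n)‖ := f.le_opNorm _
          _ ≤ 1 * (2 / (n + 1)) := by
              rw [J.norm_map, norm_eC]
              exact mul_le_mul_of_nonneg_right hf1 (by positivity)
          _ = 2 / (n + 1) := one_mul _
      have hsplit : f (J (vC n)) = f x + f (J (eC n)) := by
        rw [show vC n = uC + eC n from rfl, map_add, map_add]
      rw [hsplit] at hfv
      have h4 : (2 : ℝ) / (n+1) = 1/(n+1) + 1/(n+1) := by ring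
      linarith
    have hfx : f x = 1 - 1 / (n + 1) := le_antisymm hupper hlower
    refine ⟨f, ⟨hfe, ?_⟩, hfx⟩
    rintro ⟨-, hfx1⟩
    rw [hfx] at hfx1
    have := one_div_pos_nat n
    linarith
  -- conclude
  have hSne : S.Nonempty := ⟨_, hmem 0⟩
  have hbdd : BddAbove S := ⟨1, hub⟩
  refine le_antisymm (csSup_le hSne hub) ?_
  have htend : Tendsto (fun n : ℕ => (1 - 1/(n+1) : ℝ)) atTop (𝓝 1) := uFun_tendsto
  exact le_of_tendsto' htend fun n => le_csSup hbdd (hmem n)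

end
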